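/- Let R be a generalized vertical sum of finite posets P and Q (on disjoint carriers X and Y), with an up-set B⁻ of P, a down-set B⁺ of Q, S⁻ = P restricted to B⁻, S⁺ = Q restricted to B⁺, and a map σ : D(S⁺) → P(B⁻) satisfying σ(T) ⊆ X ∩ ↓_R T ⊆ ↓_P σ(T) for all T ∈ D(S⁺). Let M be the set of minimal points of Q and let P⁺ be the subposet of R induced on X ∪ B⁺. Then for every T ∈ D(S⁺): a_T(R) = Σ_{U ∈ D(S⁻), σ(T) ⊆ U} a_U(P) + Σ_{μ=1}^{#(M∩T)} (−1)^{μ−1} Σ_{N ⊆ M∩T, #N = μ} a_{T∖N}(P⁺ ∖ ↓_{P⁺} N), where a_{T∖N}(P⁺ ∖ ↓_{P⁺} N) is the sum, over all down-sets D of the subposet P⁺ ∖ ↓_{P⁺} N with D ∩ (B⁺∖N) = T∖N, of the number of down-sets E of P⁺ ∖ ↓_{P⁺} N with E ⊆ D. -/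

import Mathlib

attribute [local instance] Classical.propDecidable

variable {α : Type*} [Fintype α] [PartialOrder α]

/-- The down-sets of the subposet of `α` induced on the carrier `C`. -/
noncomputable def dsOn (C : Finset α) : Finset (Finset α) :=
  Finset.univ.filter fun D => D ⊆ C ∧ ∀ a ∈ C, ∀ b ∈ D, a ≤ b → a ∈ D

/-- `aCoef C Yp T` is the sum, over all down-sets `D` of the subposet induced on `C`
with `D ∩ Yp = T`, of the number of down-sets `E` of that subposet with `E ⊆ D`. -/
noncomputable def aCoef (C Yp T : Finset α) : ℕ :=
  ∑ D ∈ (dsOn C).filter (fun D => D ∩ Yp = T),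
    ((dsOn C).filter fun E => E ⊆ D).card

/-- The down closure `↓_R S` of `S` in the ambient poset. -/
noncomputable def dcl (S : Finset α) : Finset α :=
  Finset.univ.filter fun a => ∃ b ∈ S, a ≤ b

/-- The down closure of `S` within the subposet induced on the carrier `C`. -/
noncomputable def dclOn (C S : Finset α) : Finset α :=
  C.filter fun a => ∃ b ∈ S, b ∈ C ∧ a ≤ b

lemma mem_dsOn {C D : Finset α} :
    D ∈ dsOn C ↔ D ⊆ C ∧ ∀ a ∈ C, ∀ b ∈ D, a ≤ b → a ∈ D := by
  simp [dsOn]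

lemma altSum (s k : ℕ) (hs : s ≤ k) :
    ∑ μ ∈ Finset.Icc 1 k, (-1:ℤ)^(μ-1) * (s.choose μ) = if s = 0 then 0 else 1 := by
  have h1 : ∑ μ ∈ Finset.range (k+1), (-1:ℤ)^μ * (s.choose μ) = if s = 0 then 1 else 0 := by
    rw [← Int.alternating_sum_range_choose (n := s)]
    symm
    apply Finset.sum_subset
    · intro x hx; simp only [Finset.mem_range] at *; omega
    · intro x hx hnx
      simp only [Finset.mem_range] at hx hnx
      have : s < x := by omega
      simp [Nat.choose_eq_zero_of_lt this]
  have h2 : Finset.range (k+1) = insert 0 (Finset.Icc 1 k) := by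
    ext x; simp only [Finset.mem_insert, Finset.mem_Icc, Finset.mem_range]; omega
  rw [h2, Finset.sum_insert (by simp)] at h1
  have h3 : ∀ μ ∈ Finset.Icc 1 k, (-1:ℤ)^μ * (s.choose μ) = -((-1:ℤ)^(μ-1) * (s.choose μ)) := by
    intro μ hμ
    simp only [Finset.mem_Icc] at hμ
    obtain ⟨ν, rfl⟩ : ∃ ν, μ = ν + 1 := ⟨μ-1, by omega⟩
    simp only [Nat.add_sub_cancel, pow_succ]; ring
  rw [Finset.sum_congr rfl h3, Finset.sum_neg_distrib] at h1
  simp only [pow_zero, Nat.choose_zero_right, Nat.cast_one, one_mul] at h1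
  by_cases hs0 : s = 0 <;> simp [hs0] at h1 ⊢ <;> linarith

lemma mem_dcl {S : Finset α} {x : α} : x ∈ dcl S ↔ ∃ b ∈ S, x ≤ b := by simp [dcl]

lemma mem_dclOn {C S : Finset α} {x : α} :
    x ∈ dclOn C S ↔ x ∈ C ∧ ∃ b ∈ S, b ∈ C ∧ x ≤ b := by simp [dclOn]

lemma dsOn_of_subset {C C' : Finset α} (hsub : C' ⊆ C)
    (hdc : ∀ a ∈ C, ∀ b ∈ C', a ≤ b → a ∈ C') {E : Finset α} (hE : E ⊆ C') :
    E ∈ dsOn C ↔ E ∈ dsOn C' := by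
  simp only [mem_dsOn]
  constructor
  · rintro ⟨-, h⟩; exact ⟨hE, fun a ha b hb hab => h a (hsub ha) b hb hab⟩
  · rintro ⟨-, h⟩
    exact ⟨hE.trans hsub, fun a ha b hb hab => h a (hdc a ha b (hE hb) hab) b hb hab⟩

lemma union_mem_dsOn {C K F : Finset α} (hKC : K ⊆ C)
    (hKd : ∀ a ∈ C, ∀ b ∈ K, a ≤ b → a ∈ K) (hF : F ∈ dsOn (C \ K)) :
    F ∪ K ∈ dsOn C := by
  obtain ⟨hF1, hF2⟩ := mem_dsOn.1 hF
  refine mem_dsOn.2 ⟨?_, ?_⟩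
  · intro x hx
    rcases Finset.mem_union.1 hx with h | h
    · exact (Finset.mem_sdiff.1 (hF1 h)).1
    · exact hKC h
  · intro a ha b hb hab
    rcases Finset.mem_union.1 hb with h | h
    · by_cases haK : a ∈ K
      · exact Finset.mem_union_right _ haK
      · exact Finset.mem_union_left _ (hF2 a (Finset.mem_sdiff.2 ⟨ha, haK⟩) b h hab)
    · exact Finset.mem_union_right _ (hKd a ha b h hab)

lemma sdiff_mem_dsOn {C K D : Finset α} (hD : D ∈ dsOn C) : D \ K ∈ dsOn (C \ K) := by
  obtain ⟨hD1, hD2⟩ := mem_dsOn.1 hD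
  refine mem_dsOn.2 ⟨?_, ?_⟩
  · intro x hx
    rcases Finset.mem_sdiff.1 hx with ⟨h1, h2⟩
    exact Finset.mem_sdiff.2 ⟨hD1 h1, h2⟩
  · intro a ha b hb hab
    rcases Finset.mem_sdiff.1 ha with ⟨ha1, ha2⟩
    rcases Finset.mem_sdiff.1 hb with ⟨hb1, hb2⟩
    exact Finset.mem_sdiff.2 ⟨hD2 a ha1 b hb1 hab, ha2⟩

/-- Let `R` be a finite poset on `X ∪ Y` (here: the ambient type `α`), `X, Y` disjoint,
which is a generalized vertical sum of `P = R|X` and `Q = R|Y`; let `B⁻` be an up-set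
of `P`, `B⁺` a down-set of `Q`, `S⁻ = P|B⁻`, `S⁺ = Q|B⁺`, and
`σ : D(S⁺) → P(B⁻)` with `σ(T) ⊆ X ∩ ↓_R T ⊆ ↓_P σ(T)`.  Let `M` be the set of
minimal points of `Q` and `P⁺ = R|(X ∪ B⁺)`.  Then for every `T ∈ D(S⁺)`:
`a_T(R) = ∑_{U ∈ D(S⁻), σ(T) ⊆ U} a_U(P)`
`+ ∑_{μ=1}^{#(M∩T)} (−1)^{μ−1} ∑_{N ⊆ M∩T, #N = μ} a_{T∖N}(P⁺ ∖ ↓_{P⁺} N)`. -/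
theorem stmt1 (X Y Bm Bp : Finset α)
    (hdisj : Disjoint X Y) (hcover : X ∪ Y = Finset.univ)
    (hgvs : ∀ a b : α, a ≤ b →
      (a ∈ X ∧ b ∈ X) ∨ (a ∈ Y ∧ b ∈ Y) ∨ (a ∈ X ∧ b ∈ Y))
    (hBmX : Bm ⊆ X) (hBmUp : ∀ a ∈ Bm, ∀ b ∈ X, a ≤ b → b ∈ Bm)
    (hBpY : Bp ⊆ Y) (hBpDown : ∀ a ∈ Y, ∀ b ∈ Bp, a ≤ b → a ∈ Bp)
    (σ : Finset α → Finset α)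
    (hσ : ∀ T ∈ dsOn Bp, σ T ⊆ Bm ∧ σ T ⊆ X ∩ dcl T ∧ X ∩ dcl T ⊆ dclOn X (σ T)) :
    ∀ T ∈ dsOn Bp,
      (aCoef Finset.univ Y T : ℤ)
        = ∑ U ∈ (dsOn Bm).filter (fun U => σ T ⊆ U), (aCoef X Bm U : ℤ)
          + ∑ μ ∈ Finset.Icc 1 ((Y.filter (fun m => ∀ y ∈ Y, y ≤ m → y = m) ∩ T).card),
              (-1 : ℤ) ^ (μ - 1) *
                ∑ N ∈ ((Y.filter (fun m => ∀ y ∈ Y, y ≤ m → y = m) ∩ T).powerset.filter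
                    fun N => N.card = μ),
                  (aCoef ((X ∪ Bp) \ dclOn (X ∪ Bp) N) (Bp \ N) (T \ N) : ℤ) := by
  intro T hT
  obtain ⟨hσBm, hσsub, hσcl⟩ := hσ T hT
  obtain ⟨hTBp, hTdown⟩ := mem_dsOn.1 hT
  set M' := Y.filter (fun m => ∀ y ∈ Y, y ≤ m → y = m) with hM'def
  set C := X ∪ Bp with hCdef
  have hXC : X ⊆ C := Finset.subset_union_left
  have hBpC : Bp ⊆ C := Finset.subset_union_right
  have hTY : T ⊆ Y := hTBp.trans hBpY
  have hTC : T ⊆ C := hTBp.trans hBpC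
  -- C is a down-set of the ambient poset
  have hCd : ∀ a : α, ∀ b ∈ C, a ≤ b → a ∈ C := by
    intro a b hb hab
    rcases hgvs a b hab with ⟨ha, _⟩ | ⟨ha, hbY⟩ | ⟨ha, _⟩
    · exact hXC ha
    · have hbBp : b ∈ Bp := by
        rcases Finset.mem_union.1 hb with h | h
        · exact absurd (hdisj.le_bot (by simp [h, hbY] : b ∈ X ⊓ Y)) (by simp)
        · exact h
      exact hBpC (hBpDown a ha b hbBp hab)
    · exact hXC ha
  -- X is down-closed within C
  have hXd : ∀ a ∈ C, ∀ b ∈ X, a ≤ b → a ∈ X := by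
    intro a _ b hb hab
    rcases hgvs a b hab with ⟨ha, _⟩ | ⟨_, hbY⟩ | ⟨ha, _⟩
    · exact ha
    · exact absurd (hdisj.le_bot (by simp [hb, hbY] : b ∈ X ⊓ Y)) (by simp)
    · exact ha
  have hsubC : ∀ {E : Finset α}, E ⊆ C → (E ∈ dsOn Finset.univ ↔ E ∈ dsOn C) :=
    fun {E} hE => dsOn_of_subset (Finset.subset_univ C)
      (fun a _ b hb hab => hCd a b hb hab) hE
  have hsubX : ∀ {E : Finset α}, E ⊆ X → (E ∈ dsOn C ↔ E ∈ dsOn X) :=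
    fun {E} hE => dsOn_of_subset hXC hXd hE
  -- Step 0 : a_T(R) = a_T(P⁺)
  have step0 : aCoef Finset.univ Y T = aCoef C Bp T := by
    have hsets : (dsOn Finset.univ).filter (fun D => D ∩ Y = T)
        = (dsOn C).filter (fun D => D ∩ Bp = T) := by
      ext D
      simp only [Finset.mem_filter]
      constructor
      · rintro ⟨hD, hDY⟩
        have hDC : D ⊆ C := by
          intro x hx
          have hxu : x ∈ X ∪ Y := by rw [hcover]; exact Finset.mem_univ x
          rcases Finset.mem_union.1 hxu with h | h
          · exact hXC h
          · have hxT : x ∈ T := by rw [← hDY]; exact Finset.mem_inter.2 ⟨hx, h⟩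
            exact hTC hxT
        refine ⟨(hsubC hDC).1 hD, ?_⟩
        apply subset_antisymm
        · intro x hx
          obtain ⟨h1, h2⟩ := Finset.mem_inter.1 hx
          rw [← hDY]; exact Finset.mem_inter.2 ⟨h1, hBpY h2⟩
        · intro x hx
          have h1 : x ∈ D ∩ Y := by rw [hDY]; exact hx
          exact Finset.mem_inter.2 ⟨(Finset.mem_inter.1 h1).1, hTBp hx⟩
      · rintro ⟨hD, hDBp⟩
        have hDC := (mem_dsOn.1 hD).1
        refine ⟨(hsubC hDC).2 hD, ?_⟩
        apply subset_antisymm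
        · intro x hx
          obtain ⟨h1, h2⟩ := Finset.mem_inter.1 hx
          have hxBp : x ∈ Bp := by
            rcases Finset.mem_union.1 (hDC h1) with h | h
            · exact absurd h2 (Finset.disjoint_left.1 hdisj h)
            · exact h
          rw [← hDBp]; exact Finset.mem_inter.2 ⟨h1, hxBp⟩
        · intro x hx
          have h1 : x ∈ D ∩ Bp := by rw [hDBp]; exact hx
          exact Finset.mem_inter.2 ⟨(Finset.mem_inter.1 h1).1, hTY hx⟩
    rw [aCoef, aCoef, hsets]
    apply Finset.sum_congr rfl
    intro D hD
    obtain ⟨hD1, -⟩ := Finset.mem_filter.1 hD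
    have hDC := (mem_dsOn.1 hD1).1
    congr 1
    ext E
    simp only [Finset.mem_filter]
    constructor
    · rintro ⟨hE, hED⟩; exact ⟨(hsubC (hED.trans hDC)).1 hE, hED⟩
    · rintro ⟨hE, hED⟩; exact ⟨(hsubC (hED.trans hDC)).2 hE, hED⟩
  rw [step0]
  set J := (dsOn C).filter (fun D => D ∩ Bp = T) with hJdef
  -- split inner counts
  have hsplit : (aCoef C Bp T : ℤ)
      = (∑ D ∈ J, ((dsOn C).filter (fun E => E ⊆ D ∧ E ∩ Bp = ∅)).card : ℤ)
        + (∑ D ∈ J, ((dsOn C).filter (fun E => E ⊆ D ∧ E ∩ Bp ≠ ∅)).card : ℤ) := by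
    have key : ∀ D : Finset α, ((dsOn C).filter (fun E => E ⊆ D)).card
        = ((dsOn C).filter (fun E => E ⊆ D ∧ E ∩ Bp = ∅)).card
          + ((dsOn C).filter (fun E => E ⊆ D ∧ E ∩ Bp ≠ ∅)).card := by
      intro D
      rw [← Finset.filter_filter, ← Finset.filter_filter]
      exact (Finset.card_filter_add_card_filter_not (fun E => E ∩ Bp = ∅)).symm
    have h1 : aCoef C Bp T
        = (∑ D ∈ J, ((dsOn C).filter (fun E => E ⊆ D ∧ E ∩ Bp = ∅)).card)
          + (∑ D ∈ J, ((dsOn C).filter (fun E => E ⊆ D ∧ E ∩ Bp ≠ ∅)).card) := by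
      rw [aCoef, ← Finset.sum_add_distrib]
      exact Finset.sum_congr rfl (fun D _ => key D)
    rw [h1]; push_cast; ring
  rw [hsplit]
  congr 1
  · -- Part 1
    have hσX : σ T ⊆ X := hσsub.trans Finset.inter_subset_left
    have hXfilter : ∀ D ∈ J, (dsOn C).filter (fun E => E ⊆ D ∧ E ∩ Bp = ∅)
        = (dsOn X).filter (fun E => E ⊆ D ∩ X) := by
      intro D hD
      ext E
      simp only [Finset.mem_filter]
      constructor
      · rintro ⟨hE, hED, hEBp⟩
        have hEX : E ⊆ X := by
          intro x hx
          rcases Finset.mem_union.1 ((mem_dsOn.1 hE).1 hx) with h | h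
          · exact h
          · exfalso
            have hmem : x ∈ E ∩ Bp := Finset.mem_inter.2 ⟨hx, h⟩
            rw [hEBp] at hmem; simp at hmem
        exact ⟨(hsubX hEX).1 hE, fun x hx => Finset.mem_inter.2 ⟨hED hx, hEX hx⟩⟩
      · rintro ⟨hE, hEDX⟩
        have hEX := (mem_dsOn.1 hE).1
        refine ⟨(hsubX hEX).2 hE, fun x hx => (Finset.mem_inter.1 (hEDX hx)).1, ?_⟩
        apply Finset.eq_empty_of_forall_notMem
        intro x hx
        obtain ⟨h1, h2⟩ := Finset.mem_inter.1 hx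
        exact Finset.disjoint_left.1 hdisj (hEX h1) (hBpY h2)
    rw [Finset.sum_congr rfl (fun D hD => by rw [hXfilter D hD] :
      ∀ D ∈ J, (((dsOn C).filter (fun E => E ⊆ D ∧ E ∩ Bp = ∅)).card : ℤ)
        = (((dsOn X).filter (fun E => E ⊆ D ∩ X)).card : ℤ))]
    have hbij : ∑ D ∈ J, (((dsOn X).filter (fun E => E ⊆ D ∩ X)).card : ℤ)
        = ∑ A ∈ (dsOn X).filter (fun A => σ T ⊆ A),
            (((dsOn X).filter (fun E => E ⊆ A)).card : ℤ) := by
      apply Finset.sum_nbij' (i := fun D => D ∩ X) (j := fun A => A ∪ T)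
      · -- hi
        intro D hD
        obtain ⟨hD1, hD2⟩ := Finset.mem_filter.1 hD
        obtain ⟨hDC, hDd⟩ := mem_dsOn.1 hD1
        refine Finset.mem_filter.2 ⟨Finset.mem_filter.2 ⟨Finset.mem_univ _, ?_, ?_⟩, ?_⟩
        · exact Finset.inter_subset_right
        · intro a ha b hb hab
          exact Finset.mem_inter.2
            ⟨hDd a (hXC ha) b (Finset.mem_inter.1 hb).1 hab, ha⟩
        · intro x hx
          obtain ⟨hx1, hx2⟩ := Finset.mem_inter.1 (hσsub hx)
          obtain ⟨b, hbT, hxb⟩ := mem_dcl.1 hx2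
          have hbD : b ∈ D := by
            have : b ∈ D ∩ Bp := by rw [hD2]; exact hbT
            exact (Finset.mem_inter.1 this).1
          exact Finset.mem_inter.2 ⟨hDd x (hXC hx1) b hbD hxb, hx1⟩
      · -- hj
        intro A hA
        obtain ⟨hA1, hA2⟩ := Finset.mem_filter.1 hA
        obtain ⟨hAX, hAd⟩ := mem_dsOn.1 hA1
        refine Finset.mem_filter.2 ⟨Finset.mem_filter.2 ⟨Finset.mem_univ _, ?_, ?_⟩, ?_⟩
        · exact Finset.union_subset (hAX.trans hXC) hTC
        · intro a ha b hb hab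
          rcases Finset.mem_union.1 hb with hbA | hbT
          · exact Finset.mem_union_left _ (hAd a (hXd a ha b (hAX hbA) hab) b hbA hab)
          · rcases hgvs a b hab with ⟨haX, hbX⟩ | ⟨haY, hbY⟩ | ⟨haX, hbY⟩
            · exact absurd (hTY hbT) (Finset.disjoint_left.1 hdisj hbX)
            · exact Finset.mem_union_right _
                (hTdown a (hBpDown a haY b (hTBp hbT) hab) b hbT hab)
            · have hadcl : a ∈ X ∩ dcl T :=
                Finset.mem_inter.2 ⟨haX, mem_dcl.2 ⟨b, hbT, hab⟩⟩
              obtain ⟨-, c, hcσ, -, hac⟩ := mem_dclOn.1 (hσcl hadcl)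
              exact Finset.mem_union_left _ (hAd a haX c (hA2 hcσ) hac)
        · ext x
          simp only [Finset.mem_inter, Finset.mem_union]
          constructor
          · rintro ⟨hx1 | hx1, hx2⟩
            · exact absurd (hBpY hx2) (Finset.disjoint_left.1 hdisj (hAX hx1))
            · exact hx1
          · intro hx; exact ⟨Or.inr hx, hTBp hx⟩
      · -- left inverse
        intro D hD
        obtain ⟨hD1, hD2⟩ := Finset.mem_filter.1 hD
        have hDC := (mem_dsOn.1 hD1).1
        ext x
        simp only [Finset.mem_union, Finset.mem_inter]
        constructor
        · rintro (⟨hx1, -⟩ | hx)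
          · exact hx1
          · have : x ∈ D ∩ Bp := by rw [hD2]; exact hx
            exact (Finset.mem_inter.1 this).1
        · intro hx
          rcases Finset.mem_union.1 (hDC hx) with h | h
          · exact Or.inl ⟨hx, h⟩
          · exact Or.inr (by rw [← hD2]; exact Finset.mem_inter.2 ⟨hx, h⟩)
      · -- right inverse
        intro A hA
        obtain ⟨hA1, -⟩ := Finset.mem_filter.1 hA
        have hAX := (mem_dsOn.1 hA1).1
        ext x
        simp only [Finset.mem_inter, Finset.mem_union]
        constructor
        · rintro ⟨hx1 | hx1, hx2⟩
          · exact hx1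
          · exact absurd (hTY hx1) (Finset.disjoint_left.1 hdisj hx2)
        · intro hx; exact ⟨Or.inl hx, hAX hx⟩
      · intro D _; rfl
    rw [hbij]
    -- regrouping on the right-hand side
    have hfib : ∀ U ∈ (dsOn Bm).filter (fun U => σ T ⊆ U),
        (aCoef X Bm U : ℤ)
          = ∑ A ∈ ((dsOn X).filter (fun A => σ T ⊆ A)).filter (fun A => A ∩ Bm = U),
              (((dsOn X).filter (fun E => E ⊆ A)).card : ℤ) := by
      intro U hU
      obtain ⟨-, hσU⟩ := Finset.mem_filter.1 hU
      have : ((dsOn X).filter (fun A => σ T ⊆ A)).filter (fun A => A ∩ Bm = U)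
          = (dsOn X).filter (fun A => A ∩ Bm = U) := by
        rw [Finset.filter_filter]
        apply Finset.filter_congr
        intro A hA
        simp only [and_iff_right_iff_imp]
        intro hABm
        intro x hx
        exact (Finset.mem_inter.1 (by rw [← hABm] at hσU; exact hσU hx)).1
      rw [this, aCoef]; push_cast; rfl
    rw [Finset.sum_congr rfl hfib]
    exact (Finset.sum_fiberwise_of_maps_to (fun A hA => by
      obtain ⟨hA1, hA2⟩ := Finset.mem_filter.1 hA
      obtain ⟨hAX, hAd⟩ := mem_dsOn.1 hA1
      refine Finset.mem_filter.2 ⟨Finset.mem_filter.2 ⟨Finset.mem_univ _, ?_, ?_⟩, ?_⟩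
      · exact Finset.inter_subset_right
      · intro a ha b hb hab
        exact Finset.mem_inter.2
          ⟨hAd a (hBmX ha) b (Finset.mem_inter.1 hb).1 hab, ha⟩
      · exact fun x hx => Finset.mem_inter.2 ⟨hA2 hx, hσBm hx⟩) _).symm
  · -- Part 2
    set Mt := M' ∩ T with hMtdef
    have hMtT : Mt ⊆ T := Finset.inter_subset_right
    have stepC1 : ∀ N ⊆ Mt, (aCoef (C \ dclOn C N) (Bp \ N) (T \ N) : ℤ)
        = ∑ D ∈ J, (((dsOn C).filter (fun E => E ⊆ D ∧ N ⊆ E)).card : ℤ) := by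
      intro N hNMt
      have hNT : N ⊆ T := hNMt.trans hMtT
      have hNBp : N ⊆ Bp := hNT.trans hTBp
      have hNC : N ⊆ C := hNBp.trans hBpC
      have hNM' : N ⊆ M' := hNMt.trans Finset.inter_subset_left
      set K := dclOn C N with hKdef
      have hKC : K ⊆ C := Finset.filter_subset _ _
      have hNK : N ⊆ K := fun n hn => mem_dclOn.2 ⟨hNC hn, n, hn, hNC hn, le_refl n⟩
      have hKd : ∀ a ∈ C, ∀ b ∈ K, a ≤ b → a ∈ K := by
        intro a ha b hb hab
        obtain ⟨-, n, hn, hnC, hbn⟩ := mem_dclOn.1 hb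
        exact mem_dclOn.2 ⟨ha, n, hn, hnC, hab.trans hbn⟩
      have hKBp : K ∩ Bp = N := by
        ext x
        simp only [Finset.mem_inter]
        constructor
        · rintro ⟨hxK, hxBp⟩
          obtain ⟨-, n, hnN, -, hxn⟩ := mem_dclOn.1 hxK
          have hnM' : n ∈ M' := hNM' hnN
          rw [hM'def] at hnM'
          obtain ⟨hnY, hmin⟩ := Finset.mem_filter.1 hnM'
          have hxeq := hmin x (hBpY hxBp) hxn
          rw [hxeq]; exact hnN
        · intro hx; exact ⟨hNK hx, hNBp hx⟩
      have hKE : ∀ E ∈ dsOn C, N ⊆ E → K ⊆ E := by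
        intro E hE hNE x hx
        obtain ⟨hxC, n, hnN, hnC, hxn⟩ := mem_dclOn.1 hx
        exact (mem_dsOn.1 hE).2 x hxC n (hNE hnN) hxn
      rw [aCoef]
      push_cast
      apply Finset.sum_nbij' (i := fun F => F ∪ K) (j := fun D => D \ K)
      · -- hi
        intro F hF
        obtain ⟨hF1, hF2⟩ := Finset.mem_filter.1 hF
        have hFCK := (mem_dsOn.1 hF1).1
        refine Finset.mem_filter.2 ⟨union_mem_dsOn hKC hKd hF1, ?_⟩
        have h1 : (F ∪ K) ∩ Bp = (F ∩ Bp) ∪ N := by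
          rw [Finset.union_inter_distrib_right, hKBp]
        have h2 : F ∩ Bp = F ∩ (Bp \ N) := by
          ext x
          simp only [Finset.mem_inter, Finset.mem_sdiff]
          constructor
          · rintro ⟨hxF, hxBp⟩
            refine ⟨hxF, hxBp, fun hxN => ?_⟩
            exact (Finset.mem_sdiff.1 (hFCK hxF)).2 (hNK hxN)
          · rintro ⟨hxF, hxBp, -⟩; exact ⟨hxF, hxBp⟩
        rw [h1, h2, hF2, Finset.sdiff_union_of_subset hNT]
      · -- hj
        intro D hD
        obtain ⟨hD1, hD2⟩ := Finset.mem_filter.1 hD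
        have hND : N ⊆ D := by
          intro n hn
          have : n ∈ D ∩ Bp := by rw [hD2]; exact hNT hn
          exact (Finset.mem_inter.1 this).1
        have hKD : K ⊆ D := hKE D hD1 hND
        refine Finset.mem_filter.2 ⟨sdiff_mem_dsOn hD1, ?_⟩
        ext x
        simp only [Finset.mem_inter, Finset.mem_sdiff]
        constructor
        · rintro ⟨⟨hxD, hxK⟩, hxBp, hxN⟩
          refine ⟨?_, hxN⟩
          rw [← hD2]; exact Finset.mem_inter.2 ⟨hxD, hxBp⟩
        · rintro ⟨hxT, hxN⟩
          have hx : x ∈ D ∩ Bp := by rw [hD2]; exact hxT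
          obtain ⟨hxD, hxBp⟩ := Finset.mem_inter.1 hx
          refine ⟨⟨hxD, fun hxK => ?_⟩, hxBp, hxN⟩
          exact hxN (by rw [← hKBp]; exact Finset.mem_inter.2 ⟨hxK, hxBp⟩)
      · -- left inverse
        intro F hF
        obtain ⟨hF1, -⟩ := Finset.mem_filter.1 hF
        have hFCK := (mem_dsOn.1 hF1).1
        ext x
        simp only [Finset.mem_sdiff, Finset.mem_union]
        constructor
        · rintro ⟨hx1 | hx1, hx2⟩
          · exact hx1
          · exact absurd hx1 hx2
        · intro hx
          exact ⟨Or.inl hx, (Finset.mem_sdiff.1 (hFCK hx)).2⟩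
      · -- right inverse
        intro D hD
        obtain ⟨hD1, hD2⟩ := Finset.mem_filter.1 hD
        have hND : N ⊆ D := by
          intro n hn
          have : n ∈ D ∩ Bp := by rw [hD2]; exact hNT hn
          exact (Finset.mem_inter.1 this).1
        exact Finset.sdiff_union_of_subset (hKE D hD1 hND)
      · -- summand transfer
        intro F hF
        obtain ⟨hF1, -⟩ := Finset.mem_filter.1 hF
        have hFCK := (mem_dsOn.1 hF1).1
        have : ((dsOn (C \ K)).filter (fun E => E ⊆ F)).card
            = ((dsOn C).filter (fun E => E ⊆ F ∪ K ∧ N ⊆ E)).card := by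
          apply Finset.card_nbij' (i := fun E' => E' ∪ K) (j := fun E => E \ K)
          · intro E' hE'
            obtain ⟨hE'1, hE'2⟩ := Finset.mem_filter.1 hE'
            exact Finset.mem_filter.2 ⟨union_mem_dsOn hKC hKd hE'1,
              Finset.union_subset_union_left hE'2,
              hNK.trans Finset.subset_union_right⟩
          · intro E hE
            obtain ⟨hE1, hEFK, hNE⟩ := Finset.mem_filter.1 hE
            refine Finset.mem_filter.2 ⟨sdiff_mem_dsOn hE1, ?_⟩
            intro x hx
            obtain ⟨hx1, hx2⟩ := Finset.mem_sdiff.1 hx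
            rcases Finset.mem_union.1 (hEFK hx1) with h | h
            · exact h
            · exact absurd h hx2
          · intro E' hE'
            obtain ⟨hE'1, -⟩ := Finset.mem_filter.1 hE'
            have hE'CK := (mem_dsOn.1 hE'1).1
            ext x
            simp only [Finset.mem_sdiff, Finset.mem_union]
            constructor
            · rintro ⟨hx1 | hx1, hx2⟩
              · exact hx1
              · exact absurd hx1 hx2
            · intro hx
              exact ⟨Or.inl hx, (Finset.mem_sdiff.1 (hE'CK hx)).2⟩
          · intro E hE
            obtain ⟨hE1, -, hNE⟩ := Finset.mem_filter.1 hE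
            exact Finset.sdiff_union_of_subset (hKE E hE1 hNE)
        rw [this]
    have hcnt : ∀ D N : Finset α,
        ((((dsOn C).filter (fun E => E ⊆ D ∧ N ⊆ E)).card : ℤ))
          = ∑ E ∈ (dsOn C).filter (fun E => E ⊆ D), (if N ⊆ E then 1 else 0 : ℤ) := by
      intro D N
      rw [← Finset.filter_filter, ← Finset.sum_boole]
    have hmin : ∀ D ∈ J, ∀ E ∈ dsOn C, E ⊆ D → ((Mt ∩ E) = ∅ ↔ E ∩ Bp = ∅) := by
      intro D hD E hE hED
      obtain ⟨-, hDBp⟩ := Finset.mem_filter.1 hD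
      constructor
      · intro h
        by_contra hne
        obtain ⟨x, hx⟩ := Finset.nonempty_iff_ne_empty.2 hne
        obtain ⟨m, hm, hmmin⟩ : ∃ m ∈ E ∩ Bp, ∀ y ∈ E ∩ Bp, ¬ y < m := by
          obtain ⟨m, hm1, hm2⟩ := (E ∩ Bp).exists_minimal ⟨x, hx⟩
          exact ⟨m, hm1, fun y hy hlt => hlt.not_ge (hm2 hy hlt.le)⟩
        obtain ⟨hmE, hmBp⟩ := Finset.mem_inter.1 hm
        have hmM' : m ∈ M' := by
          rw [hM'def]
          refine Finset.mem_filter.2 ⟨hBpY hmBp, ?_⟩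
          intro y hy hym
          by_contra hne'
          have hyBp : y ∈ Bp := hBpDown y hy m hmBp hym
          have hyE : y ∈ E := (mem_dsOn.1 hE).2 y (hBpC hyBp) m hmE hym
          exact hmmin y (Finset.mem_inter.2 ⟨hyE, hyBp⟩) (lt_of_le_of_ne hym hne')
        have hmT : m ∈ T := by
          rw [← hDBp]; exact Finset.mem_inter.2 ⟨hED hmE, hmBp⟩
        have hmem : m ∈ Mt ∩ E :=
          Finset.mem_inter.2 ⟨Finset.mem_inter.2 ⟨hmM', hmT⟩, hmE⟩
        rw [h] at hmem; simp at hmem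
      · intro h
        apply Finset.eq_empty_of_forall_notMem
        intro x hx
        obtain ⟨hx1, hx2⟩ := Finset.mem_inter.1 hx
        have hxT : x ∈ T := (Finset.mem_inter.1 hx1).2
        have hmem : x ∈ E ∩ Bp := Finset.mem_inter.2 ⟨hx2, hTBp hxT⟩
        rw [h] at hmem; simp at hmem
    have hDE : ∀ D ∈ J, ∀ E ∈ (dsOn C).filter (fun E => E ⊆ D),
        (∑ μ ∈ Finset.Icc 1 Mt.card, ∑ N ∈ Mt.powerset.filter (fun N => N.card = μ),
          ((-1:ℤ)^(μ-1) * if N ⊆ E then 1 else 0))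
          = if E ∩ Bp ≠ ∅ then 1 else 0 := by
      intro D hD E hEmem
      obtain ⟨hE, hED⟩ := Finset.mem_filter.1 hEmem
      have hinner : ∀ μ : ℕ, ∑ N ∈ Mt.powerset.filter (fun N => N.card = μ),
          ((-1:ℤ)^(μ-1) * if N ⊆ E then 1 else 0)
            = (-1:ℤ)^(μ-1) * ((Mt ∩ E).card.choose μ) := by
        intro μ
        rw [← Finset.mul_sum]
        congr 1
        rw [Finset.sum_boole]
        have hps : (Mt.powerset.filter (fun N => N.card = μ)).filter (fun N => N ⊆ E)
            = Finset.powersetCard μ (Mt ∩ E) := by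
          rw [Finset.powersetCard_eq_filter]
          ext N
          simp only [Finset.mem_filter, Finset.mem_powerset, Finset.subset_inter_iff]
          tauto
        rw [hps, Finset.card_powersetCard]
      rw [Finset.sum_congr rfl (fun μ _ => hinner μ),
        altSum ((Mt ∩ E).card) Mt.card (Finset.card_le_card Finset.inter_subset_left)]
      have hiff := hmin D hD E hE hED
      by_cases hc : E ∩ Bp = ∅
      · simp [hc, Finset.card_eq_zero, hiff.2 hc]
      · have hne : ¬(Mt ∩ E) = ∅ := fun h => hc (hiff.1 h)
        simp only [Finset.card_eq_zero]
        rw [if_neg hne, if_pos hc]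
    symm
    have e1 : ∑ μ ∈ Finset.Icc 1 Mt.card, (-1:ℤ)^(μ-1) *
          ∑ N ∈ Mt.powerset.filter (fun N => N.card = μ),
            (aCoef (C \ dclOn C N) (Bp \ N) (T \ N) : ℤ)
        = ∑ μ ∈ Finset.Icc 1 Mt.card, ∑ N ∈ Mt.powerset.filter (fun N => N.card = μ),
            ∑ D ∈ J, ∑ E ∈ (dsOn C).filter (fun E => E ⊆ D),
              ((-1:ℤ)^(μ-1) * if N ⊆ E then 1 else 0) := by
      apply Finset.sum_congr rfl; intro μ _
      rw [Finset.mul_sum]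
      apply Finset.sum_congr rfl; intro N hN
      rw [stepC1 N (Finset.mem_powerset.1 (Finset.mem_filter.1 hN).1), Finset.mul_sum]
      apply Finset.sum_congr rfl; intro D _
      rw [hcnt D N, Finset.mul_sum]
    have e2 : ∑ μ ∈ Finset.Icc 1 Mt.card, ∑ N ∈ Mt.powerset.filter (fun N => N.card = μ),
            ∑ D ∈ J, ∑ E ∈ (dsOn C).filter (fun E => E ⊆ D),
              ((-1:ℤ)^(μ-1) * if N ⊆ E then 1 else 0)
        = ∑ D ∈ J, ∑ E ∈ (dsOn C).filter (fun E => E ⊆ D),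
            ∑ μ ∈ Finset.Icc 1 Mt.card, ∑ N ∈ Mt.powerset.filter (fun N => N.card = μ),
              ((-1:ℤ)^(μ-1) * if N ⊆ E then 1 else 0) := by
      rw [Finset.sum_congr rfl (fun μ _ => Finset.sum_comm), Finset.sum_comm]
      apply Finset.sum_congr rfl; intro D _
      rw [Finset.sum_congr rfl (fun μ _ => Finset.sum_comm), Finset.sum_comm]
    have e3 : ∑ D ∈ J, ∑ E ∈ (dsOn C).filter (fun E => E ⊆ D),
            ∑ μ ∈ Finset.Icc 1 Mt.card, ∑ N ∈ Mt.powerset.filter (fun N => N.card = μ),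
              ((-1:ℤ)^(μ-1) * if N ⊆ E then 1 else 0)
        = ∑ D ∈ J, (((dsOn C).filter (fun E => E ⊆ D ∧ E ∩ Bp ≠ ∅)).card : ℤ) := by
      apply Finset.sum_congr rfl; intro D hD
      rw [Finset.sum_congr rfl (fun E hE => hDE D hD E hE), Finset.sum_boole,
        Finset.filter_filter]
    rw [e1, e2, e3]
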